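/- arXiv:2104.03121 — 7 statements merged into one kernel-verified Lean document; each statement's English description precedes it below -/
import Mathlib

section
/- Let (L : ℬ → 𝒜, R : 𝒜 → ℬ, η, ε) be an adjunction L ⊣ R with R lax monoidal, and let 𝓛 be a left 𝒜-module category (with action ⊙ : 𝒜 × 𝓛 → 𝓛) and 𝓜 a left ℬ-module category, F : 𝓛 → 𝓜 a functor. Then there is a bijection between R-lax structures on F (natural transformations β_{a,x} : R(a) ⊙ F(x) → F(a ⊙ x) compatible with the lax monoidality of R and the module structures) and L-oplax structures on F (natural transformations α_{b,x} : b ⊙ F(x) → F(L(b) ⊙ x) making F a lax module functor for the pulled back ℬ-action), given by α_{b,x} = β_{L(b),x} ∘ (η_b ⊙ 1) and β_{a,x} = F(ε_a ⊙ 1) ∘ α_{R(a),x}. -/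
/-!
STATEMENT 7: Given an adjunction `L ⊣ R` with `R : 𝒜 ⥤ ℬ` lax monoidal, a left `𝒜`-module
category `𝓛` and a left `ℬ`-module category `𝓜`, and a functor `F : 𝓛 ⥤ 𝓜`, there is a
bijection between `R`-lax structures on `F` and `L`-oplax structures on `F`, given by
`α_{b,x} = β_{L(b),x} ∘ (η_b ⊙ 1)` and `β_{a,x} = F(ε_a ⊙ 1) ∘ α_{R(a),x}`.
-/

open CategoryTheory MonoidalCategory CategoryTheory.Functor.LaxMonoidal

namespace Stmt7

/-- A left module category over a monoidal category: an action bifunctor together with a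
(strong) associator and unitor satisfying naturality and coherence. -/
structure LeftModuleStruct (A : Type*) [Category A] [MonoidalCategory A]
    (L : Type*) [Category L] where
  act : A ⥤ L ⥤ L
  assoc : ∀ (a b : A) (x : L), (act.obj (a ⊗ b)).obj x ≅ (act.obj a).obj ((act.obj b).obj x)
  unitor : ∀ x : L, (act.obj (𝟙_ A)).obj x ≅ x
  assoc_natural :
    ∀ {a a' b b' : A} {x x' : L} (f : a ⟶ a') (g : b ⟶ b') (h : x ⟶ x'),
      (act.map (f ⊗ₘ g)).app x ≫ (act.obj (a' ⊗ b')).map h ≫ (assoc a' b' x').hom =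
        (assoc a b x).hom ≫ (act.map f).app _ ≫
          (act.obj a').map ((act.map g).app x ≫ (act.obj b').map h)
  unitor_natural : ∀ {x x' : L} (h : x ⟶ x'),
    (act.obj (𝟙_ A)).map h ≫ (unitor x').hom = (unitor x).hom ≫ h
  pentagon : ∀ (a b c : A) (x : L),
    (act.map (α_ a b c).hom).app x ≫ (assoc a (b ⊗ c) x).hom ≫
      (act.obj a).map (assoc b c x).hom =
    (assoc (a ⊗ b) c x).hom ≫ (assoc a b ((act.obj c).obj x)).hom
  triangle : ∀ (a : A) (x : L),
    (act.map (λ_ a).hom).app x = (assoc (𝟙_ A) a x).hom ≫ (unitor ((act.obj a).obj x)).hom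
  triangle' : ∀ (a : A) (x : L),
    (act.map (ρ_ a).hom).app x = (assoc a (𝟙_ A) x).hom ≫ (act.obj a).map (unitor x).hom

variable {A : Type*} [Category A] [MonoidalCategory A]
variable {B : Type*} [Category B] [MonoidalCategory B]
variable {LA : Type*} [Category LA] {LB : Type*} [Category LB]

/-- The action of an object. -/
abbrev LeftModuleStruct.smul {A : Type*} [Category A] [MonoidalCategory A]
    {L : Type*} [Category L] (M : LeftModuleStruct A L) (a : A) (x : L) : L :=
  (M.act.obj a).obj x

section

variable (MA : LeftModuleStruct A LA) (MB : LeftModuleStruct B LB)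
variable (Lf : B ⥤ A) (R : A ⥤ B) [R.LaxMonoidal] (adj : Lf ⊣ R) (F : LA ⥤ LB)

/-- `β` is an `R`-lax structure on `F`: natural transformation
`β_{a,x} : R(a) ⊙ F(x) ⟶ F(a ⊙ x)` satisfying the two coherence diagrams. -/
def IsRLax (β : ∀ (a : A) (x : LA), MB.smul (R.obj a) (F.obj x) ⟶ F.obj (MA.smul a x)) :
    Prop :=
  (∀ {a a' : A} (f : a ⟶ a') {x x' : LA} (g : x ⟶ x'),
    (MB.act.map (R.map f)).app (F.obj x) ≫ (MB.act.obj (R.obj a')).map (F.map g) ≫ β a' x' =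
      β a x ≫ F.map ((MA.act.map f).app x ≫ (MA.act.obj a').map g)) ∧
  (∀ (a b : A) (x : LA),
    (MB.act.map (μ R a b)).app (F.obj x) ≫ β (a ⊗ b) x ≫ F.map (MA.assoc a b x).hom =
      (MB.assoc (R.obj a) (R.obj b) (F.obj x)).hom ≫
        (MB.act.obj (R.obj a)).map (β b x) ≫ β a (MA.smul b x)) ∧
  (∀ x : LA,
    (MB.act.map (ε R)).app (F.obj x) ≫ β (𝟙_ A) x ≫ F.map (MA.unitor x).hom =
      (MB.unitor (F.obj x)).hom)

/-- The oplax monoidal structure map `L(a ⊗ b) ⟶ L(a) ⊗ L(b)` of the left adjoint `L`,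
induced by the adjunction and the lax monoidal structure of `R`. -/
noncomputable def deltaL (a b : B) : Lf.obj (a ⊗ b) ⟶ Lf.obj a ⊗ Lf.obj b :=
  Lf.map (adj.unit.app a ⊗ₘ adj.unit.app b) ≫
    Lf.map (μ R (Lf.obj a) (Lf.obj b)) ≫ adj.counit.app (Lf.obj a ⊗ Lf.obj b)

/-- The oplax monoidal structure map `L(𝟙_ℬ) ⟶ 𝟙_𝒜` of the left adjoint `L`. -/
noncomputable def etaL : Lf.obj (𝟙_ B) ⟶ 𝟙_ A :=
  Lf.map (ε R) ≫ adj.counit.app (𝟙_ A)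

/-- `α` is an `L`-oplax structure on `F`: it makes `F` a lax `ℬ`-module functor for the
`ℬ`-action on `𝓛` pulled back along `L` (whose oplax associator and unitor are induced by
the oplax monoidal structure of `L` coming from the adjunction). -/
noncomputable def IsLOplax
    (α : ∀ (b : B) (x : LA), MB.smul b (F.obj x) ⟶ F.obj (MA.smul (Lf.obj b) x)) : Prop :=
  (∀ {b b' : B} (f : b ⟶ b') {x x' : LA} (g : x ⟶ x'),
    (MB.act.map f).app (F.obj x) ≫ (MB.act.obj b').map (F.map g) ≫ α b' x' =
      α b x ≫ F.map ((MA.act.map (Lf.map f)).app x ≫ (MA.act.obj (Lf.obj b')).map g)) ∧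
  (∀ (a b : B) (x : LA),
    (MB.assoc a b (F.obj x)).hom ≫ (MB.act.obj a).map (α b x) ≫ α a (MA.smul (Lf.obj b) x) =
      α (a ⊗ b) x ≫
        F.map ((MA.act.map (deltaL Lf R adj a b)).app x ≫
          (MA.assoc (Lf.obj a) (Lf.obj b) x).hom)) ∧
  (∀ x : LA,
    α (𝟙_ B) x ≫ F.map ((MA.act.map (etaL Lf R adj)).app x ≫ (MA.unitor x).hom) =
      (MB.unitor (F.obj x)).hom)

/-- From an `R`-lax structure to an `L`-oplax structure: `α_{b,x} = β_{L(b),x} ∘ (η_b ⊙ 1)`. -/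
noncomputable def toOplax
    (β : ∀ (a : A) (x : LA), MB.smul (R.obj a) (F.obj x) ⟶ F.obj (MA.smul a x)) :
    ∀ (b : B) (x : LA), MB.smul b (F.obj x) ⟶ F.obj (MA.smul (Lf.obj b) x) :=
  fun b x => (MB.act.map (adj.unit.app b)).app (F.obj x) ≫ β (Lf.obj b) x

/-- From an `L`-oplax structure to an `R`-lax structure: `β_{a,x} = F(ε_a ⊙ 1) ∘ α_{R(a),x}`. -/
noncomputable def toLax
    (α : ∀ (b : B) (x : LA), MB.smul b (F.obj x) ⟶ F.obj (MA.smul (Lf.obj b) x)) :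
    ∀ (a : A) (x : LA), MB.smul (R.obj a) (F.obj x) ⟶ F.obj (MA.smul a x) :=
  fun a x => α (R.obj a) x ≫ F.map ((MA.act.map (adj.counit.app a)).app x)

/-- Compatibility of the unit with `deltaL`. -/
lemma unit_delta (a b : B) :
    adj.unit.app (a ⊗ b) ≫ R.map (deltaL Lf R adj a b) =
      (adj.unit.app a ⊗ₘ adj.unit.app b) ≫ μ R (Lf.obj a) (Lf.obj b) := by
  rw [deltaL, Functor.map_comp, Functor.map_comp, ← Category.assoc]
  erw [adj.unit_naturality]
  rw [Category.assoc, ← Category.assoc (adj.unit.app _)]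
  erw [adj.unit_naturality]
  rw [Category.assoc,
    adj.right_triangle_components, Category.comp_id]

/-- Compatibility of the counit with `deltaL`. -/
lemma delta_counit (a b : A) :
    deltaL Lf R adj (R.obj a) (R.obj b) ≫ (adj.counit.app a ⊗ₘ adj.counit.app b) =
      Lf.map (μ R a b) ≫ adj.counit.app (a ⊗ b) := by
  have h := adj.counit_naturality (adj.counit.app a ⊗ₘ adj.counit.app b)
  simp only [Functor.comp_obj, Functor.id_obj] at h
  rw [deltaL, Category.assoc, Category.assoc, ← h,
    ← Category.assoc (Lf.map (μ R (Lf.obj (R.obj a)) (Lf.obj (R.obj b)))), ← Functor.map_comp]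
  have h2 := μ_natural R (adj.counit.app a) (adj.counit.app b)
  simp only [Functor.comp_obj, Functor.id_obj] at h2
  rw [← h2, ← Category.assoc, ← Functor.map_comp,
    ← Category.assoc, tensorHom_comp_tensorHom, adj.right_triangle_components, adj.right_triangle_components,
    id_tensorHom_id, Category.id_comp]

/-- Compatibility of the unit with `etaL`. -/
lemma unit_etaL : adj.unit.app (𝟙_ B) ≫ R.map (etaL Lf R adj) = ε R := by
  rw [etaL, Functor.map_comp, ← Category.assoc]
  erw [adj.unit_naturality]
  rw [Category.assoc,
    adj.right_triangle_components, Category.comp_id]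

/-- The two constructions are mutually inverse bijections between the set of `R`-lax
structures on `F` and that of `L`-oplax structures on `F`. -/
theorem rLax_equiv_lOplax :
    (∀ β, IsRLax MA MB R F β → IsLOplax MA MB Lf R adj F (toOplax MA MB Lf R adj F β)) ∧
    (∀ α, IsLOplax MA MB Lf R adj F α → IsRLax MA MB R F (toLax MA MB Lf R adj F α)) ∧
    (∀ β, IsRLax MA MB R F β →
      toLax MA MB Lf R adj F (toOplax MA MB Lf R adj F β) = β) ∧
    (∀ α, IsLOplax MA MB Lf R adj F α →
      toOplax MA MB Lf R adj F (toLax MA MB Lf R adj F α) = α) := by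
  refine ⟨?_, ?_, ?_, ?_⟩
  · -- R-lax to L-oplax
    rintro β ⟨hn, ha, hu⟩
    have bn1 : ∀ {a a' : A} (f : a ⟶ a') (x : LA),
        (MB.act.map (R.map f)).app (F.obj x) ≫ β a' x =
          β a x ≫ F.map ((MA.act.map f).app x) := by
      intro a a' f x; simpa using hn f (𝟙 x)
    have nu : ∀ (b : B) {y y' : LB} (h : y ⟶ y'),
        (MB.act.obj b).map h ≫ (MB.act.map (adj.unit.app b)).app y' =
          (MB.act.map (adj.unit.app b)).app y ≫ (MB.act.obj (R.obj (Lf.obj b))).map h := by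
      intro b y y' h; exact (MB.act.map (adj.unit.app b)).naturality h
    refine ⟨?_, ?_, ?_⟩
    · intro b b' f x x' g
      simp only [toOplax]
      rw [reassoc_of% nu b' (F.map g),
        ← NatTrans.comp_app_assoc, ← MB.act.map_comp, ← adj.unit_naturality f,
        MB.act.map_comp, NatTrans.comp_app_assoc, hn (Lf.map f) g, Category.assoc]
    · intro a b x
      simp only [toOplax]
      have h1 : (MB.act.map (adj.unit.app a ⊗ₘ adj.unit.app b)).app (F.obj x) ≫
          (MB.assoc (R.obj (Lf.obj a)) (R.obj (Lf.obj b)) (F.obj x)).hom =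
          (MB.assoc a b (F.obj x)).hom ≫
            (MB.act.map (adj.unit.app a)).app ((MB.act.obj b).obj (F.obj x)) ≫
            (MB.act.obj (R.obj (Lf.obj a))).map
              ((MB.act.map (adj.unit.app b)).app (F.obj x)) := by
        simpa using MB.assoc_natural (adj.unit.app a) (adj.unit.app b) (𝟙 (F.obj x))
      have s1 : (MB.act.obj a).map (β (Lf.obj b) x) ≫
          (MB.act.map (adj.unit.app a)).app (F.obj (MA.smul (Lf.obj b) x)) =
          (MB.act.map (adj.unit.app a)).app (MB.smul (R.obj (Lf.obj b)) (F.obj x)) ≫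
            (MB.act.obj (R.obj (Lf.obj a))).map (β (Lf.obj b) x) := nu a _
      have s2 : (MB.act.obj a).map ((MB.act.map (adj.unit.app b)).app (F.obj x)) ≫
          (MB.act.map (adj.unit.app a)).app (MB.smul (R.obj (Lf.obj b)) (F.obj x)) =
          (MB.act.map (adj.unit.app a)).app ((MB.act.obj b).obj (F.obj x)) ≫
            (MB.act.obj (R.obj (Lf.obj a))).map
              ((MB.act.map (adj.unit.app b)).app (F.obj x)) := nu a _
      rw [Functor.map_comp]
      slice_lhs 3 4 => rw [s1]
      slice_lhs 2 3 => rw [s2]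
      slice_lhs 1 3 => rw [← h1]
      slice_lhs 2 4 => rw [← ha (Lf.obj a) (Lf.obj b) x]
      rw [Functor.map_comp]
      slice_rhs 2 3 => rw [← bn1 (deltaL Lf R adj a b) x]
      slice_lhs 1 2 =>
        rw [← NatTrans.comp_app, ← MB.act.map_comp, ← unit_delta Lf R adj a b,
          MB.act.map_comp, NatTrans.comp_app]
      simp only [Category.assoc]
    · intro x
      simp only [toOplax]
      rw [Functor.map_comp, Category.assoc]
      slice_lhs 2 3 => rw [← bn1 (etaL Lf R adj) x]
      slice_lhs 1 2 =>
        rw [← NatTrans.comp_app, ← MB.act.map_comp, unit_etaL Lf R adj]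
      simpa using hu x
  · -- L-oplax to R-lax
    rintro α ⟨hn, ha, hu⟩
    have an1 : ∀ {b b' : B} (f : b ⟶ b') (x : LA),
        (MB.act.map f).app (F.obj x) ≫ α b' x =
          α b x ≫ F.map ((MA.act.map (Lf.map f)).app x) := by
      intro b b' f x; simpa using hn f (𝟙 x)
    have an2 : ∀ (b : B) {x x' : LA} (g : x ⟶ x'),
        (MB.act.obj b).map (F.map g) ≫ α b x' =
          α b x ≫ F.map ((MA.act.obj (Lf.obj b)).map g) := by
      intro b x x' g; simpa using hn (𝟙 b) g
    have nc : ∀ (a : A) {y y' : LA} (h : y ⟶ y'),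
        (MA.act.obj (Lf.obj (R.obj a))).map h ≫ (MA.act.map (adj.counit.app a)).app y' =
          (MA.act.map (adj.counit.app a)).app y ≫ (MA.act.obj a).map h := by
      intro a y y' h; exact (MA.act.map (adj.counit.app a)).naturality h
    refine ⟨?_, ?_, ?_⟩
    · intro a a' f x x' g
      simp only [toLax]
      have key : (MA.act.map (Lf.map (R.map f))).app x ≫
          (MA.act.obj (Lf.obj (R.obj a'))).map g ≫ (MA.act.map (adj.counit.app a')).app x' =
          (MA.act.map (adj.counit.app a)).app x ≫ (MA.act.map f).app x ≫
            (MA.act.obj a').map g := by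
        have h := adj.counit_naturality f
        rw [nc a' g, ← Category.assoc, ← NatTrans.comp_app,
          ← MA.act.map_comp, h, MA.act.map_comp, NatTrans.comp_app, Category.assoc]
      rw [reassoc_of% hn (R.map f) g]
      simp only [Category.assoc, ← Functor.map_comp]
      rw [key]
    · intro a b x
      simp only [toLax]
      have h1 : (MA.act.map (adj.counit.app a ⊗ₘ adj.counit.app b)).app x ≫
          (MA.assoc a b x).hom =
          (MA.assoc (Lf.obj (R.obj a)) (Lf.obj (R.obj b)) x).hom ≫
            (MA.act.map (adj.counit.app a)).app ((MA.act.obj (Lf.obj (R.obj b))).obj x) ≫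
            (MA.act.obj a).map ((MA.act.map (adj.counit.app b)).app x) := by
        simpa using MA.assoc_natural (adj.counit.app a) (adj.counit.app b) (𝟙 x)
      have key : (MA.act.map (Lf.map (μ R a b))).app x ≫
          (MA.act.map (adj.counit.app (a ⊗ b))).app x ≫ (MA.assoc a b x).hom =
          (MA.act.map (deltaL Lf R adj (R.obj a) (R.obj b))).app x ≫
            (MA.assoc (Lf.obj (R.obj a)) (Lf.obj (R.obj b)) x).hom ≫
            (MA.act.obj (Lf.obj (R.obj a))).map ((MA.act.map (adj.counit.app b)).app x) ≫
            (MA.act.map (adj.counit.app a)).app ((MA.act.obj b).obj x) := by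
        rw [← NatTrans.comp_app_assoc, ← MA.act.map_comp, ← delta_counit Lf R adj a b,
          MA.act.map_comp, NatTrans.comp_app_assoc, h1]
        have s3 : (MA.act.obj (Lf.obj (R.obj a))).map
            ((MA.act.map (adj.counit.app b)).app x) ≫
            (MA.act.map (adj.counit.app a)).app ((MA.act.obj b).obj x) =
            (MA.act.map (adj.counit.app a)).app ((MA.act.obj (Lf.obj (R.obj b))).obj x) ≫
              (MA.act.obj a).map ((MA.act.map (adj.counit.app b)).app x) := nc a _
        rw [s3]
      simp only [Category.assoc]
      have s4 : (MB.act.obj (R.obj a)).map (F.map ((MA.act.map (adj.counit.app b)).app x)) ≫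
          α (R.obj a) (MA.smul b x) =
          α (R.obj a) (MA.smul (Lf.obj (R.obj b)) x) ≫
            F.map ((MA.act.obj (Lf.obj (R.obj a))).map
              ((MA.act.map (adj.counit.app b)).app x)) := an2 (R.obj a) _
      rw [reassoc_of% an1 (μ R a b) x, Functor.map_comp]
      simp only [Category.assoc]
      rw [reassoc_of% s4, reassoc_of% ha (R.obj a) (R.obj b) x]
      simp only [Category.assoc, ← Functor.map_comp]
      rw [key]
    · intro x
      simp only [toLax]
      simp only [Category.assoc]
      rw [reassoc_of% an1 (ε R) x]
      have := hu x
      simp only [etaL, MA.act.map_comp, NatTrans.comp_app, Functor.map_comp,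
        Category.assoc] at this ⊢
      exact this
  · -- toLax ∘ toOplax = id
    rintro β ⟨hn, ha, hu⟩
    have bn1 : ∀ {a a' : A} (f : a ⟶ a') (x : LA),
        (MB.act.map (R.map f)).app (F.obj x) ≫ β a' x =
          β a x ≫ F.map ((MA.act.map f).app x) := by
      intro a a' f x; simpa using hn f (𝟙 x)
    funext a x
    simp only [toLax, toOplax, Category.assoc]
    have s : (MB.act.map (R.map (adj.counit.app a))).app (F.obj x) ≫ β a x =
        β (Lf.obj (R.obj a)) x ≫ F.map ((MA.act.map (adj.counit.app a)).app x) := bn1 _ x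
    rw [← s, ← NatTrans.comp_app_assoc, ← MB.act.map_comp,
      adj.right_triangle_components]
    simp
  · -- toOplax ∘ toLax = id
    rintro α ⟨hn, ha, hu⟩
    have an1 : ∀ {b b' : B} (f : b ⟶ b') (x : LA),
        (MB.act.map f).app (F.obj x) ≫ α b' x =
          α b x ≫ F.map ((MA.act.map (Lf.map f)).app x) := by
      intro b b' f x; simpa using hn f (𝟙 x)
    funext b x
    simp only [toLax, toOplax]
    rw [reassoc_of% an1 (adj.unit.app b) x]
    rw [← Functor.map_comp, ← NatTrans.comp_app, ← MA.act.map_comp,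
      adj.left_triangle_components]
    simp

end

end Stmt7
end

section
/- Let 𝒜 be a monoidal category, 𝓛 a category, and (⊙ : 𝒜 × 𝓛 → 𝓛, α) a left unital action of the E₀-algebra (𝒜, 𝟙_𝒜) on 𝓛 in the 2-category Cat, i.e., a functor ⊙ with a natural isomorphism α : 𝟙_𝒜 ⊙ − ≅ id_𝓛. Then the functor 𝒜 → Fun(𝓛,𝓛), a ↦ (a ⊙ −), factors the action through the endofunctor category; consequently the monoidal category Fun(𝓛,𝓛) with the evaluation action and the unit id_𝓛 is the terminal left unital action on 𝓛, i.e., Fun(𝓛,𝓛) is the E₀-center of 𝓛 in Cat. -/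
/-!
STATEMENT 10: For a category `𝓛`, the endofunctor category `Fun(𝓛,𝓛)` with its evaluation
action and unit `id_𝓛` is the E₀-center of `𝓛` in `Cat`: every left unital action
`(⊙ : 𝒜 × 𝓛 → 𝓛, α : 𝟙_𝒜 ⊙ − ≅ id)` of a monoidal category `(𝒜, 𝟙_𝒜)` on `𝓛` factors
through `Fun(𝓛,𝓛)` via `a ↦ (a ⊙ −)` (a 1-morphism of left unital actions exists), and
between any two 1-morphisms of left unital actions into `Fun(𝓛,𝓛)` there is a unique
2-morphism; i.e. `Fun(𝓛,𝓛)` is terminal among left unital actions on `𝓛`.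

(Actions `𝒜 × 𝓛 → 𝓛` are given in curried form `g : 𝒜 ⥤ (𝓛 ⥤ 𝓛)`; a 1-morphism of left
unital actions to the canonical action of `Fun(𝓛,𝓛)` is a triple `(p, σ, ρ)` with
`p : 𝒜 ⥤ (𝓛 ⥤ 𝓛)`, `σ : 𝟭 𝓛 ≅ p(𝟙_𝒜)`, `ρ : p ≅ g` satisfying the pasting compatibility
with `α`, and a 2-morphism `(p,σ,ρ) ⇒ (q,σ',ρ')` is `ξ : p ⟶ q` compatible with the `σ`'s
and `ρ`'s.)
-/

open CategoryTheory MonoidalCategory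

namespace Stmt10

theorem endofunctors_are_E0_center
    (L : Type*) [Category L]
    (A : Type*) [Category A] [MonoidalCategory A]
    (g : A ⥤ L ⥤ L) (α : g.obj (𝟙_ A) ≅ 𝟭 L) :
    -- the action factors through `Fun(𝓛,𝓛)` via `a ↦ a ⊙ −`: there is a 1-morphism of
    -- left unital actions whose underlying functor is `g` itself
    (∃ (σ : 𝟭 L ≅ g.obj (𝟙_ A)) (ρ : g ≅ g),
      σ.hom ≫ ρ.hom.app (𝟙_ A) ≫ α.hom = 𝟙 (𝟭 L)) ∧
    -- terminality: between any two 1-morphisms of left unital actions into the canonical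
    -- action of `Fun(𝓛,𝓛)` there is a unique 2-morphism
    (∀ (p q : A ⥤ L ⥤ L) (σ : 𝟭 L ≅ p.obj (𝟙_ A)) (σ' : 𝟭 L ≅ q.obj (𝟙_ A))
      (ρ : p ≅ g) (ρ' : q ≅ g),
      σ.hom ≫ ρ.hom.app (𝟙_ A) ≫ α.hom = 𝟙 (𝟭 L) →
      σ'.hom ≫ ρ'.hom.app (𝟙_ A) ≫ α.hom = 𝟙 (𝟭 L) →
      ∃! ξ : p ⟶ q,
        (σ.hom ≫ ξ.app (𝟙_ A) = σ'.hom) ∧ (∀ a : A, ξ.app a ≫ ρ'.hom.app a = ρ.hom.app a)) := by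
  constructor
  · refine ⟨α.symm, Iso.refl g, ?_⟩
    simp
  · intro p q σ σ' ρ ρ' h h'
    refine ⟨ρ.hom ≫ ρ'.inv, ⟨?_, ?_⟩, ?_⟩
    · have h1 : σ.hom ≫ ρ.hom.app (𝟙_ A) = α.inv := by
        rw [← cancel_mono α.hom]; simpa using h
      have h2 : σ'.hom ≫ ρ'.hom.app (𝟙_ A) = α.inv := by
        rw [← cancel_mono α.hom]; simpa using h'
      simp only [NatTrans.comp_app, ← Category.assoc, h1]
      rw [← h2]; simp
    · intro a; simp
    · intro ξ ⟨_, hξ⟩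
      ext a : 2
      have := hξ a
      simp only [NatTrans.comp_app]
      rw [← this]; simp

end Stmt10
end

section
/- Let 𝓛 be a braided monoidal category and suppose a braided monoidal category 𝒜 acts on 𝓛 via a braided monoidal functor ⊙ : 𝒜 × 𝓛 → 𝓛 with a monoidal natural isomorphism 𝟙_𝒜 ⊙ − ≅ id_𝓛. Then for every a ∈ 𝒜 the object a ⊙ 𝟙_𝓛 is transparent in 𝓛 (lies in the Müger center Z₂(𝓛)), and a ↦ a ⊙ 𝟙_𝓛 defines a braided monoidal functor 𝒜 → Z₂(𝓛). -/
/-!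
STATEMENT 12: If a braided monoidal category `𝒜` acts on a braided monoidal category `𝓛`
via a braided monoidal functor `⊙ : 𝒜 × 𝓛 ⥤ 𝓛` with a monoidal natural isomorphism
`𝟙_𝒜 ⊙ − ≅ id_𝓛`, then every object `a ⊙ 𝟙_𝓛` is transparent in `𝓛` (lies in the Müger
center `Z₂(𝓛)`), and `a ↦ a ⊙ 𝟙_𝓛` defines a braided monoidal functor `𝒜 → Z₂(𝓛)`.
-/

open CategoryTheory MonoidalCategory BraidedCategory CategoryTheory.Functor.LaxMonoidal
set_option maxHeartbeats 1600000

namespace Stmt12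

variable {A : Type*} [Category A] [MonoidalCategory A] [BraidedCategory A]
variable {L : Type*} [Category L] [MonoidalCategory L] [BraidedCategory L]

/-- The functor `x ↦ 𝟙_𝒜 ⊙ x`. -/
noncomputable def uAct (odot : A × L ⥤ L) : L ⥤ L :=
  (((Functor.const L).obj (𝟙_ A)).prod' (𝟭 L)) ⋙ odot

/-- The functor `a ↦ a ⊙ 𝟙_𝓛`. -/
noncomputable def phiF (odot : A × L ⥤ L) : A ⥤ L :=
  ((𝟭 A).prod' ((Functor.const A).obj (𝟙_ L))) ⋙ odot

lemma odot_map_congr (odot : A × L ⥤ L) {P Q : A × L} (m m' : P ⟶ Q)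
    (h1 : m.1 = m'.1) (h2 : m.2 = m'.2) : odot.map m = odot.map m' :=
  congrArg _ (Prod.ext h1 h2)

lemma unit_braid {C : Type*} [Category C] [MonoidalCategory C] [BraidedCategory C] (X : C) :
    (β_ X (𝟙_ C)).hom ≫ (β_ (𝟙_ C) X).hom = 𝟙 _ := by
  rw [braiding_tensorUnit_right, braiding_tensorUnit_left]; simp

lemma unit_braid' {C : Type*} [Category C] [MonoidalCategory C] [BraidedCategory C] (X : C) :
    (β_ (𝟙_ C) X).hom ≫ (β_ X (𝟙_ C)).hom = 𝟙 _ := by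
  rw [braiding_tensorUnit_right, braiding_tensorUnit_left]; simp

lemma unit_unit_braid {C : Type*} [Category C] [MonoidalCategory C] [BraidedCategory C] :
    (β_ (𝟙_ C) (𝟙_ C)).hom = 𝟙 _ := by
  rw [braiding_tensorUnit_left, unitors_equal]; simp

noncomputable def phiCore (odot : A × L ⥤ L) [odot.Monoidal] : (phiF odot).CoreMonoidal where
  εIso := Functor.Monoidal.εIso odot
  μIso a b := Functor.Monoidal.μIso odot (a, 𝟙_ L) (b, 𝟙_ L) ≪≫
    odot.mapIso (Iso.prod (Iso.refl (a ⊗ b)) (λ_ (𝟙_ L)))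
  μIso_hom_natural_left := by
    intro X Y f X'
    dsimp [phiF]
    simp only [Functor.Monoidal.μIso_hom, Iso.prod_hom, Iso.refl_hom]
    rw [μ_natural_left_assoc odot ((f, 𝟙 (𝟙_ L)) : ((X, 𝟙_ L) : A × L) ⟶ (Y, 𝟙_ L))
        ((X', 𝟙_ L) : A × L),
      Category.assoc, ← Functor.map_comp, ← Functor.map_comp]
    congr 1
    exact odot_map_congr odot _ _ (by simp) (by simp)
  μIso_hom_natural_right := by
    intro X Y X' f
    dsimp [phiF]
    simp only [Functor.Monoidal.μIso_hom, Iso.prod_hom, Iso.refl_hom]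
    rw [μ_natural_right_assoc odot ((X', 𝟙_ L) : A × L)
        ((f, 𝟙 (𝟙_ L)) : ((X, 𝟙_ L) : A × L) ⟶ (Y, 𝟙_ L)),
      Category.assoc, ← Functor.map_comp, ← Functor.map_comp]
    congr 1
    exact odot_map_congr odot _ _ (by simp) (by simp)
  associativity := by
    intro X Y Z
    dsimp [phiF]
    simp only [Functor.Monoidal.μIso_hom, Iso.prod_hom, Iso.refl_hom]
    have h : (α_ (odot.obj (X, 𝟙_ L)) (odot.obj (Y, 𝟙_ L)) (odot.obj (Z, 𝟙_ L))).hom ≫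
        odot.obj ((X, 𝟙_ L) : A × L) ◁ μ odot ((Y, 𝟙_ L) : A × L) (Z, 𝟙_ L) ≫
        μ odot ((X, 𝟙_ L) : A × L) ((Y ⊗ Z, 𝟙_ L ⊗ 𝟙_ L) : A × L) =
        μ odot ((X, 𝟙_ L) : A × L) (Y, 𝟙_ L) ▷ odot.obj ((Z, 𝟙_ L) : A × L) ≫
        μ odot ((X ⊗ Y, 𝟙_ L ⊗ 𝟙_ L) : A × L) ((Z, 𝟙_ L) : A × L) ≫
        odot.map ((((α_ X Y Z).hom, (α_ (𝟙_ L) (𝟙_ L) (𝟙_ L)).hom)) :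
          (((X ⊗ Y) ⊗ Z, (𝟙_ L ⊗ 𝟙_ L) ⊗ 𝟙_ L) : A × L) ⟶ (X ⊗ (Y ⊗ Z), 𝟙_ L ⊗ (𝟙_ L ⊗ 𝟙_ L))) :=
      (associativity odot ((X, 𝟙_ L) : A × L) (Y, 𝟙_ L) (Z, 𝟙_ L)).symm
    simp only [comp_whiskerRight, MonoidalCategory.whiskerLeft_comp, Category.assoc]
    rw [μ_natural_left_assoc odot
        (((𝟙 (X ⊗ Y), (λ_ (𝟙_ L)).hom)) : ((X ⊗ Y, 𝟙_ L ⊗ 𝟙_ L) : A × L) ⟶ (X ⊗ Y, 𝟙_ L))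
        ((Z, 𝟙_ L) : A × L),
      μ_natural_right_assoc odot ((X, 𝟙_ L) : A × L)
        (((𝟙 (Y ⊗ Z), (λ_ (𝟙_ L)).hom)) : ((Y ⊗ Z, 𝟙_ L ⊗ 𝟙_ L) : A × L) ⟶ (Y ⊗ Z, 𝟙_ L)),
      reassoc_of% h]
    simp only [← Functor.map_comp, Category.assoc]
    congr 2
    refine odot_map_congr odot _ _ (by simp) ?_
    simp [unitors_equal]
  left_unitality := by
    intro X
    dsimp [phiF]
    have h : (λ_ (odot.obj ((X, 𝟙_ L) : A × L))).hom =
        ε odot ▷ odot.obj ((X, 𝟙_ L) : A × L) ≫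
        μ odot ((𝟙_ A, 𝟙_ L) : A × L) (X, 𝟙_ L) ≫
        odot.map ((((λ_ X).hom, (λ_ (𝟙_ L)).hom)) :
          ((𝟙_ A ⊗ X, 𝟙_ L ⊗ 𝟙_ L) : A × L) ⟶ (X, 𝟙_ L)) :=
      left_unitality odot ((X, 𝟙_ L) : A × L)
    rw [h]
    simp only [Category.assoc, ← Functor.map_comp]
    congr 2
    exact odot_map_congr odot _ _ (by simp) (by simp)
  right_unitality := by
    intro X
    dsimp [phiF]
    have h : (ρ_ (odot.obj ((X, 𝟙_ L) : A × L))).hom =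
        odot.obj ((X, 𝟙_ L) : A × L) ◁ ε odot ≫
        μ odot ((X, 𝟙_ L) : A × L) ((𝟙_ A, 𝟙_ L) : A × L) ≫
        odot.map ((((ρ_ X).hom, (ρ_ (𝟙_ L)).hom)) :
          ((X ⊗ 𝟙_ A, 𝟙_ L ⊗ 𝟙_ L) : A × L) ⟶ (X, 𝟙_ L)) :=
      right_unitality odot ((X, 𝟙_ L) : A × L)
    rw [h]
    simp only [Category.assoc, ← Functor.map_comp]
    congr 2
    exact odot_map_congr odot _ _ (by simp) (by simp [unitors_equal])


theorem action_lands_in_Mueger_center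
    (odot : A × L ⥤ L) [odot.Monoidal]
    -- `⊙` is braided (the braiding on `𝒜 × 𝓛` is componentwise):
    (hbraided : ∀ (a b : A) (x y : L),
      (β_ (odot.obj (a, x)) (odot.obj (b, y))).hom ≫ μ odot (b, y) (a, x) =
        μ odot (a, x) (b, y) ≫
          odot.map ((((β_ a b).hom, (β_ x y).hom)) :
            ((a ⊗ b, x ⊗ y) : A × L) ⟶ (b ⊗ a, y ⊗ x)))
    -- left unital structure: a monoidal natural isomorphism `𝟙_𝒜 ⊙ − ≅ id`
    (α : uAct odot ≅ 𝟭 L)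
    (hα_unit : ε odot ≫ α.hom.app (𝟙_ L) = 𝟙 (𝟙_ L))
    (hα_tensor : ∀ x y : L,
      μ odot (𝟙_ A, x) (𝟙_ A, y) ≫
          odot.map ((((λ_ (𝟙_ A)).hom, 𝟙 (x ⊗ y))) :
            ((𝟙_ A ⊗ 𝟙_ A, x ⊗ y) : A × L) ⟶ (𝟙_ A, x ⊗ y)) ≫
          α.hom.app (x ⊗ y) =
        (α.hom.app x ⊗ₘ α.hom.app y)) :
    -- every `a ⊙ 𝟙_𝓛` is transparent in `𝓛` ...
    (∀ (a : A) (y : L),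
      (β_ (odot.obj (a, 𝟙_ L)) y).hom ≫ (β_ y (odot.obj (a, 𝟙_ L))).hom =
        𝟙 (odot.obj (a, 𝟙_ L) ⊗ y)) ∧
    -- ... and `a ↦ a ⊙ 𝟙_𝓛` is a braided monoidal functor (into `Z₂(𝓛) ⊆ 𝓛`)
    Nonempty ((phiF odot).Braided) := by
  constructor
  · -- Part 1: transparency
    have key : ∀ (a : A) (y : L),
        (β_ (odot.obj (a, 𝟙_ L)) (odot.obj ((𝟙_ A, y) : A × L))).hom ≫
          (β_ (odot.obj ((𝟙_ A, y) : A × L)) (odot.obj (a, 𝟙_ L))).hom = 𝟙 _ := by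
      intro a y
      have h1 := hbraided a (𝟙_ A) (𝟙_ L) y
      have h2 := hbraided (𝟙_ A) a y (𝟙_ L)
      have hmap : odot.map ((((β_ a (𝟙_ A)).hom, (β_ (𝟙_ L) y).hom)) :
            ((a ⊗ 𝟙_ A, 𝟙_ L ⊗ y) : A × L) ⟶ (𝟙_ A ⊗ a, y ⊗ 𝟙_ L)) ≫
          odot.map ((((β_ (𝟙_ A) a).hom, (β_ y (𝟙_ L)).hom)) :
            ((𝟙_ A ⊗ a, y ⊗ 𝟙_ L) : A × L) ⟶ (a ⊗ 𝟙_ A, 𝟙_ L ⊗ y)) =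
          odot.map (𝟙 ((a ⊗ 𝟙_ A, 𝟙_ L ⊗ y) : A × L)) := by
        rw [← Functor.map_comp]
        exact odot_map_congr odot _ _ (unit_braid a) (unit_braid' y)
      have hcancel : ((β_ (odot.obj (a, 𝟙_ L)) (odot.obj ((𝟙_ A, y) : A × L))).hom ≫
            (β_ (odot.obj ((𝟙_ A, y) : A × L)) (odot.obj (a, 𝟙_ L))).hom) ≫
            μ odot ((a, 𝟙_ L) : A × L) ((𝟙_ A, y) : A × L) =
          𝟙 _ ≫ μ odot ((a, 𝟙_ L) : A × L) ((𝟙_ A, y) : A × L) := by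
        rw [Category.assoc, h2, reassoc_of% h1, hmap, CategoryTheory.Functor.map_id]; simp
      exact (cancel_mono _).mp hcancel
    intro a y
    obtain ⟨f, hf⟩ : ∃ f : odot.obj ((𝟙_ A, y) : A × L) ⟶ y, IsIso f :=
      ⟨α.hom.app y, (α.app y).isIso_hom⟩
    haveI := hf
    haveI : IsIso (odot.obj (a, 𝟙_ L) ◁ f) := inferInstance
    rw [← cancel_epi (odot.obj (a, 𝟙_ L) ◁ f), Category.comp_id,
      braiding_naturality_right_assoc, braiding_naturality_left, reassoc_of% (key a y)]
  · -- Part 2: braided monoidal functor structure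
    letI : (phiF odot).Monoidal := (phiCore odot).toMonoidal
    refine ⟨{ braided := fun X Y => ?_ }⟩
    have hb := hbraided X Y (𝟙_ L) (𝟙_ L)
    show ((Functor.Monoidal.μIso odot ((X, 𝟙_ L) : A × L) (Y, 𝟙_ L)).hom ≫
        odot.map ((𝟙 (X ⊗ Y), (λ_ (𝟙_ L)).hom) :
          ((X ⊗ Y, 𝟙_ L ⊗ 𝟙_ L) : A × L) ⟶ (X ⊗ Y, 𝟙_ L))) ≫
        odot.map (((β_ X Y).hom, 𝟙 (𝟙_ L)) : ((X ⊗ Y, 𝟙_ L) : A × L) ⟶ (Y ⊗ X, 𝟙_ L)) =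
      (β_ (odot.obj (X, 𝟙_ L)) (odot.obj (Y, 𝟙_ L))).hom ≫
        (Functor.Monoidal.μIso odot ((Y, 𝟙_ L) : A × L) (X, 𝟙_ L)).hom ≫
        odot.map ((𝟙 (Y ⊗ X), (λ_ (𝟙_ L)).hom) :
          ((Y ⊗ X, 𝟙_ L ⊗ 𝟙_ L) : A × L) ⟶ (Y ⊗ X, 𝟙_ L))
    simp only [Functor.Monoidal.μIso_hom, Category.assoc]
    rw [reassoc_of% hb]
    simp only [← Functor.map_comp]
    congr 1
    exact odot_map_congr odot _ _ (by simp) (by simp [unit_unit_braid, unitors_equal, unitors_inv_equal])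


end Stmt12
end

section
/- Let 𝒜 be a braided monoidal category with braiding c, and let 𝓛 be a strongly unital monoidal left 𝒜̄-module enriched in 𝒜 (where 𝒜̄ denotes 𝒜 with the inverse braiding), so that the canonical construction gives an 𝒜-enriched monoidal category ᴬ𝓛. Then the monoidal structure on ᴬ𝓛 is determined by composition morphisms [x₁,x₂] ⊗ [y₁,y₂] → [x₁⊗y₁, x₂⊗y₂] induced by the universal property of internal homs from the composite ([x₁,x₂] ⊗ [y₁,y₂]) ⊙ (x₁ ⊗ y₁) → ([x₁,x₂] ⊙ x₁) ⊗ ([y₁,y₂] ⊙ y₁) → x₂ ⊗ y₂ (using the oplax monoidal structure of ⊙ and the evaluations), and these morphisms are compatible with the enriched composition: the square relating ([y₁,y₂]⊗[z₁,z₂]) composed tensor-wise and composition-wise commutes, making ᴬ𝓛 an enriched monoidal category whose underlying monoidal category is 𝓛. -/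
/-!
STATEMENT 13: Let `𝒜` be braided and `𝓛` a strongly unital monoidal left `𝒜̄`-module
enriched in `𝒜` (the action `⊙` is oplax monoidal, with structure maps
`m2 : (a⊗b) ⊙ (x⊗y) ⟶ (a⊙x) ⊗ (b⊙y)`).  The tensor morphisms
`t : [x₁,x₂] ⊗ [y₁,y₂] ⟶ [x₁⊗y₁, x₂⊗y₂]` induced by the universal property of internal
homs from `([x₁,x₂] ⊗ [y₁,y₂]) ⊙ (x₁⊗y₁) ⟶ ([x₁,x₂]⊙x₁) ⊗ ([y₁,y₂]⊙y₁) ⟶ x₂ ⊗ y₂` are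
compatible with the enriched composition (the interchange square commutes, where the middle
swap uses the (anti-)braiding of `𝒜`) and with the enriched identities, making the
canonical construction `ᴬ𝓛` an enriched monoidal category with underlying monoidal
category `𝓛`.
-/

open CategoryTheory MonoidalCategory BraidedCategory

namespace Stmt13

/-- A left module category over a monoidal category. -/
structure LeftModuleStruct (A : Type*) [Category A] [MonoidalCategory A]
    (L : Type*) [Category L] where
  act : A ⥤ L ⥤ L
  assoc : ∀ (a b : A) (x : L), (act.obj (a ⊗ b)).obj x ≅ (act.obj a).obj ((act.obj b).obj x)
  unitor : ∀ x : L, (act.obj (𝟙_ A)).obj x ≅ x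
  assoc_natural :
    ∀ {a a' b b' : A} {x x' : L} (f : a ⟶ a') (g : b ⟶ b') (h : x ⟶ x'),
      (act.map (f ⊗ₘ g)).app x ≫ (act.obj (a' ⊗ b')).map h ≫ (assoc a' b' x').hom =
        (assoc a b x).hom ≫ (act.map f).app _ ≫
          (act.obj a').map ((act.map g).app x ≫ (act.obj b').map h)
  unitor_natural : ∀ {x x' : L} (h : x ⟶ x'),
    (act.obj (𝟙_ A)).map h ≫ (unitor x').hom = (unitor x).hom ≫ h
  pentagon : ∀ (a b c : A) (x : L),
    (act.map (α_ a b c).hom).app x ≫ (assoc a (b ⊗ c) x).hom ≫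
      (act.obj a).map (assoc b c x).hom =
    (assoc (a ⊗ b) c x).hom ≫ (assoc a b ((act.obj c).obj x)).hom
  triangle : ∀ (a : A) (x : L),
    (act.map (λ_ a).hom).app x = (assoc (𝟙_ A) a x).hom ≫ (unitor ((act.obj a).obj x)).hom
  triangle' : ∀ (a : A) (x : L),
    (act.map (ρ_ a).hom).app x = (assoc a (𝟙_ A) x).hom ≫ (act.obj a).map (unitor x).hom

abbrev LeftModuleStruct.smul {A : Type*} [Category A] [MonoidalCategory A]
    {L : Type*} [Category L] (M : LeftModuleStruct A L) (a : A) (x : L) : L :=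
  (M.act.obj a).obj x

section

variable {A : Type*} [Category A] [MonoidalCategory A] [BraidedCategory A]
variable {L : Type*} [Category L] [MonoidalCategory L]
variable (M : LeftModuleStruct A L)
variable (H : L → L → A)
variable (e : ∀ (a : A) (x y : L), (M.smul a x ⟶ y) ≃ (a ⟶ H x y))

noncomputable def ev (x y : L) : M.smul (H x y) x ⟶ y := (e (H x y) x y).symm (𝟙 (H x y))

noncomputable def idA (x : L) : 𝟙_ A ⟶ H x x := e (𝟙_ A) x x (M.unitor x).hom

noncomputable def compA (x y z : L) : H y z ⊗ H x y ⟶ H x z :=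
  e (H y z ⊗ H x y) x z
    ((M.assoc (H y z) (H x y) x).hom ≫ (M.act.obj (H y z)).map (ev M H e x y) ≫ ev M H e y z)

/-- The middle-four swap in `𝒜`, using the anti-braiding (Convention 4.3). -/
noncomputable def swapA (a₁ a₂ b₁ b₂ : A) : (a₁ ⊗ a₂) ⊗ (b₁ ⊗ b₂) ⟶ (a₁ ⊗ b₁) ⊗ (a₂ ⊗ b₂) :=
  (α_ a₁ a₂ (b₁ ⊗ b₂)).hom ≫
    (a₁ ◁ ((α_ a₂ b₁ b₂).inv ≫ ((β_ b₁ a₂).inv ▷ b₂) ≫ (α_ b₁ a₂ b₂).hom)) ≫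
    (α_ a₁ b₁ (a₂ ⊗ b₂)).inv

section

variable (m2 : ∀ (a b : A) (x y : L),
  M.smul (a ⊗ b) (x ⊗ y) ⟶ M.smul a x ⊗ M.smul b y)

/-- The enriched tensor product morphism `[x₁,x₂] ⊗ [y₁,y₂] ⟶ [x₁⊗y₁, x₂⊗y₂]` induced by
the universal property of internal homs. -/
noncomputable def tmor (x₁ x₂ y₁ y₂ : L) :
    H x₁ x₂ ⊗ H y₁ y₂ ⟶ H (x₁ ⊗ y₁) (x₂ ⊗ y₂) :=
  e (H x₁ x₂ ⊗ H y₁ y₂) (x₁ ⊗ y₁) (x₂ ⊗ y₂)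
    (m2 (H x₁ x₂) (H y₁ y₂) x₁ y₁ ≫ (ev M H e x₁ x₂ ⊗ₘ ev M H e y₁ y₂))

lemma map_app_ev
    (nat : ∀ {a a' : A} (f : a' ⟶ a) {x y : L} (g : M.smul a x ⟶ y),
      e a' x y ((M.act.map f).app x ≫ g) = f ≫ e a x y g)
    {a : A} {x y : L} (f : a ⟶ H x y) :
    (M.act.map f).app x ≫ ev M H e x y = (e a x y).symm f := by
  apply (e a x y).injective
  rw [Equiv.apply_symm_apply, ev, nat, Equiv.apply_symm_apply, Category.comp_id]

theorem canonical_construction_monoidal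
    -- naturality of the internal-hom adjunction
    (nat : ∀ {a a' : A} (f : a' ⟶ a) {x y : L} (g : M.smul a x ⟶ y),
      e a' x y ((M.act.map f).app x ≫ g) = f ≫ e a x y g)
    -- naturality of the oplax structure maps of the action
    (hm2_nat : ∀ {a a' b b' : A} {x x' y y' : L}
      (f : a ⟶ a') (g : b ⟶ b') (p : x ⟶ x') (q : y ⟶ y'),
      (M.act.map (f ⊗ₘ g)).app (x ⊗ y) ≫ (M.act.obj (a' ⊗ b')).map (p ⊗ₘ q) ≫
          m2 a' b' x' y' =
        m2 a b x y ≫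
          (((M.act.map f).app x ≫ (M.act.obj a').map p) ⊗ₘ
            ((M.act.map g).app y ≫ (M.act.obj b').map q)))
    -- oplax compatibility of `m2` with the module associator and the anti-braiding of `𝒜`
    (hm2_assoc : ∀ (a₁ a₂ b₁ b₂ : A) (x y : L),
      (M.act.map (swapA a₁ a₂ b₁ b₂)).app (x ⊗ y) ≫ m2 (a₁ ⊗ b₁) (a₂ ⊗ b₂) x y ≫
          ((M.assoc a₁ b₁ x).hom ⊗ₘ (M.assoc a₂ b₂ y).hom) =
        (M.assoc (a₁ ⊗ a₂) (b₁ ⊗ b₂) (x ⊗ y)).hom ≫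
          (M.act.obj (a₁ ⊗ a₂)).map (m2 b₁ b₂ x y) ≫
          m2 a₁ a₂ (M.smul b₁ x) (M.smul b₂ y))
    -- unit compatibility of `m2`
    (hm2_unit : ∀ x y : L,
      m2 (𝟙_ A) (𝟙_ A) x y ≫ ((M.unitor x).hom ⊗ₘ (M.unitor y).hom) =
        (M.act.map (λ_ (𝟙_ A)).hom).app (x ⊗ y) ≫ (M.unitor (x ⊗ y)).hom) :
    -- the interchange square: the tensor morphisms are compatible with the composition
    (∀ x₁ x₂ x₃ y₁ y₂ y₃ : L,
      swapA (H x₂ x₃) (H y₂ y₃) (H x₁ x₂) (H y₁ y₂) ≫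
          (compA M H e x₁ x₂ x₃ ⊗ₘ compA M H e y₁ y₂ y₃) ≫
          tmor M H e m2 x₁ x₃ y₁ y₃ =
        (tmor M H e m2 x₂ x₃ y₂ y₃ ⊗ₘ tmor M H e m2 x₁ x₂ y₁ y₂) ≫
          compA M H e (x₁ ⊗ y₁) (x₂ ⊗ y₂) (x₃ ⊗ y₃)) ∧
    -- and with the enriched identities, so that the underlying monoidal category is `𝓛`
    (∀ x y : L,
      (λ_ (𝟙_ A)).inv ≫ (idA M H e x ⊗ₘ idA M H e y) ≫ tmor M H e m2 x x y y =
        idA M H e (x ⊗ y)) := by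
  have htm : ∀ x₁ x₂ y₁ y₂ : L,
      (M.act.map (tmor M H e m2 x₁ x₂ y₁ y₂)).app (x₁ ⊗ y₁) ≫
          ev M H e (x₁ ⊗ y₁) (x₂ ⊗ y₂) =
        m2 (H x₁ x₂) (H y₁ y₂) x₁ y₁ ≫ (ev M H e x₁ x₂ ⊗ₘ ev M H e y₁ y₂) := by
    intro x₁ x₂ y₁ y₂
    rw [map_app_ev M H e nat, tmor, Equiv.symm_apply_apply]
  have hc : ∀ x y z : L,
      (M.act.map (compA M H e x y z)).app x ≫ ev M H e x z =
        (M.assoc (H y z) (H x y) x).hom ≫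
          (M.act.obj (H y z)).map (ev M H e x y) ≫ ev M H e y z := by
    intro x y z
    rw [map_app_ev M H e nat, compA, Equiv.symm_apply_apply]
  have hi : ∀ z : L,
      (M.act.map (idA M H e z)).app z ≫ ev M H e z z = (M.unitor z).hom := by
    intro z
    rw [map_app_ev M H e nat, idA, Equiv.symm_apply_apply]
  constructor
  · intro x₁ x₂ x₃ y₁ y₂ y₃
    apply (e _ _ _).symm.injective
    rw [← map_app_ev M H e nat, ← map_app_ev M H e nat]
    simp only [Functor.map_comp, NatTrans.comp_app, Category.assoc]
    rw [htm, hc]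
    have h1 := hm2_nat (compA M H e x₁ x₂ x₃) (compA M H e y₁ y₂ y₃) (𝟙 x₁) (𝟙 y₁)
    simp at h1
    rw [reassoc_of% h1, tensorHom_comp_tensorHom, hc, hc, ← tensorHom_comp_tensorHom, ← tensorHom_comp_tensorHom,
      reassoc_of% hm2_assoc (H x₂ x₃) (H y₂ y₃) (H x₁ x₂) (H y₁ y₂) x₁ y₁]
    have h2 := hm2_nat (𝟙 (H x₂ x₃)) (𝟙 (H y₂ y₃)) (ev M H e x₁ x₂) (ev M H e y₁ y₂)
    simp at h2
    rw [← reassoc_of% h2]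
    have h3 := M.assoc_natural (tmor M H e m2 x₂ x₃ y₂ y₃) (tmor M H e m2 x₁ x₂ y₁ y₂)
      (𝟙 (x₁ ⊗ y₁))
    simp at h3
    rw [reassoc_of% h3, ← Functor.map_comp_assoc, ← Functor.map_comp_assoc, htm]
    rw [← NatTrans.naturality_assoc, htm]
  · intro x y
    apply (e _ _ _).symm.injective
    rw [← map_app_ev M H e nat, ← map_app_ev M H e nat]
    simp only [Functor.map_comp, NatTrans.comp_app, Category.assoc]
    rw [htm, hi]
    have h1 := hm2_nat (idA M H e x) (idA M H e y) (𝟙 x) (𝟙 y)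
    simp at h1
    rw [reassoc_of% h1, tensorHom_comp_tensorHom, hi, hi, hm2_unit, ← Category.assoc,
      ← NatTrans.comp_app, ← CategoryTheory.Functor.map_comp, Iso.inv_hom_id,
      CategoryTheory.Functor.map_id, NatTrans.id_app, Category.id_comp]

end

end

end Stmt13
end

section
/- Let ℬ be a monoidal category and 𝓜 a ℬ-enriched category. Suppose for all ℬ-functors F̄, Ḡ : 𝓜 → 𝓜 the object [F̄,Ḡ] ∈ Z₁(ℬ) exists, defined as terminal among pairs (a, {a_x}) with a ∈ Z₁(ℬ) and a_x : I(a) → 𝓜(F(x),G(x)) making the naturality square (involving the half-braiding of a and the enriched structure maps of F̄ and Ḡ) commute. Then the set Z₁(ℬ)(𝟙, [F̄,Ḡ]) is in natural bijection with the set of ℬ-natural transformations F̄ ⇒ Ḡ. -/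
open CategoryTheory MonoidalCategory

namespace Stmt14

variable {B : Type*} [Category B] [MonoidalCategory B]
variable {C : Type*} [EnrichedCategory B C]

/-- `ξ` is a `ℬ`-natural transformation `F̄ ⇒ Ḡ`: a family
`ξ_x : 𝟙 ⟶ 𝓜(F(x),G(x))` satisfying the enriched naturality condition. -/
def IsENat (F G : EnrichedFunctor B C C)
    (ξ : ∀ x : C, 𝟙_ B ⟶ (F.obj x ⟶[B] G.obj x)) : Prop :=
  ∀ x y : C,
    (λ_ (x ⟶[B] y)).hom ≫ (ρ_ (x ⟶[B] y)).inv ≫ (F.map x y ⊗ₘ ξ y) ≫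
        eComp B (F.obj x) (F.obj y) (G.obj y) =
      (ξ x ⊗ₘ G.map x y) ≫ eComp B (F.obj x) (G.obj x) (G.obj y)

theorem isENat_aux (F G : EnrichedFunctor B C C)
    (T : CategoryTheory.Center B) (Tapp : GradedNatTrans T F G) (gf : 𝟙_ B ⟶ T.1)
    (hc0 : ∀ X : B, (gf ▷ X) ≫ (T.2.β X).hom = (λ_ X).hom ≫ (ρ_ X).inv ≫ (X ◁ gf)) :
    IsENat F G (fun x => gf ≫ Tapp.app x) := by
  intro x y
  have hc := hc0 (x ⟶[B] y)
  have hn := Tapp.naturality x y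
  dsimp at hn ⊢
  calc (λ_ (x ⟶[B] y)).hom ≫ (ρ_ (x ⟶[B] y)).inv ≫
        (F.map x y ⊗ₘ gf ≫ Tapp.app y) ≫ eComp B (F.obj x) (F.obj y) (G.obj y)
      = (gf ▷ (x ⟶[B] y)) ≫ (T.2.β (x ⟶[B] y)).hom ≫
          (F.map x y ⊗ₘ Tapp.app y) ≫ eComp B (F.obj x) (F.obj y) (G.obj y) := by
        conv_rhs => rw [reassoc_of% hc]
        simp [tensorHom_def', MonoidalCategory.whiskerLeft_comp]
    _ = (gf ▷ (x ⟶[B] y)) ≫ (Tapp.app x ⊗ₘ G.map x y) ≫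
          eComp B (F.obj x) (G.obj x) (G.obj y) := by rw [hn]
    _ = ((gf ≫ Tapp.app x) ⊗ₘ G.map x y) ≫
          eComp B (F.obj x) (G.obj x) (G.obj y) := by
        simp [MonoidalCategory.tensorHom_def, comp_whiskerRight]

theorem hom_from_unit_to_enriched_nat_obj_equiv_enriched_nat_trans
    (F G : EnrichedFunctor B C C)
    (T : CategoryTheory.Center B) (Tapp : GradedNatTrans T F G)
    -- `(T, Tapp)` is terminal among pairs `(a, {a_x})` satisfying the naturality square
    (hterm : ∀ (a : CategoryTheory.Center B) (σ : GradedNatTrans a F G),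
      ∃! f : a ⟶ T, ∀ x : C, f.f ≫ Tapp.app x = σ.app x) :
    -- `Z₁(ℬ)(𝟙, T) ≃ {ℬ-natural transformations F̄ ⇒ Ḡ}`, via `g ↦ {g ≫ T_x}`
    (∀ g : 𝟙_ (CategoryTheory.Center B) ⟶ T,
      IsENat F G (fun x => g.f ≫ Tapp.app x)) ∧
    (∀ ξ : ∀ x : C, 𝟙_ B ⟶ (F.obj x ⟶[B] G.obj x), IsENat F G ξ →
      ∃! g : 𝟙_ (CategoryTheory.Center B) ⟶ T, ∀ x : C, g.f ≫ Tapp.app x = ξ x) := by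
  constructor
  · intro g
    exact isENat_aux F G T Tapp g.f (fun X => by
      have h := g.comm X
      dsimp at h
      exact h.trans (Category.assoc _ _ _))
  · intro ξ hξ
    exact hterm (𝟙_ (CategoryTheory.Center B))
      { app := ξ
        naturality := fun x y => by
          have := hξ x y
          dsimp
          exact (Category.assoc _ _ _).trans this }

end Stmt14
end

section
/- Let ℬ be a rigid monoidal category and 𝓜 a left ℬ-module category. Then every lax ℬ-module functor F : 𝓜 → 𝓜 is automatically a (strong) ℬ-module functor: the lax structure morphism b ⊙ F(x) → F(b ⊙ x) has inverse given by F(b ⊙ x) → (b ⊗ bᴸ) ⊙ F(b ⊙ x) → b ⊙ F(bᴸ ⊙ (b ⊙ x)) → b ⊙ F(x), using the duality morphisms of b and the lax structure. -/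
/-!
STATEMENT 15: If `ℬ` is rigid and `𝓜` is a left `ℬ`-module category, then every lax
`ℬ`-module functor `F : 𝓜 ⥤ 𝓜` is a strong `ℬ`-module functor: each structure morphism
`α_{b,x} : b ⊙ F(x) ⟶ F(b ⊙ x)` is invertible, with inverse
`F(b⊙x) ⟶ (b ⊗ bᴸ) ⊙ F(b⊙x) ⟶ b ⊙ F(bᴸ ⊙ (b ⊙ x)) ⟶ b ⊙ F(x)` given by the duality
morphisms of `b` and the lax structure.  (Here `bᴸ` denotes the dual of `b` with
evaluation `bᴸ ⊗ b ⟶ 𝟙` and coevaluation `𝟙 ⟶ b ⊗ bᴸ`, i.e. Mathlib's right dual `bᘁ`.)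
-/

open CategoryTheory MonoidalCategory

namespace Stmt15

/-- A left module category over a monoidal category. -/
structure LeftModuleStruct (A : Type*) [Category A] [MonoidalCategory A]
    (L : Type*) [Category L] where
  act : A ⥤ L ⥤ L
  assoc : ∀ (a b : A) (x : L), (act.obj (a ⊗ b)).obj x ≅ (act.obj a).obj ((act.obj b).obj x)
  unitor : ∀ x : L, (act.obj (𝟙_ A)).obj x ≅ x
  assoc_natural :
    ∀ {a a' b b' : A} {x x' : L} (f : a ⟶ a') (g : b ⟶ b') (h : x ⟶ x'),
      (act.map (f ⊗ₘ g)).app x ≫ (act.obj (a' ⊗ b')).map h ≫ (assoc a' b' x').hom =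
        (assoc a b x).hom ≫ (act.map f).app _ ≫
          (act.obj a').map ((act.map g).app x ≫ (act.obj b').map h)
  unitor_natural : ∀ {x x' : L} (h : x ⟶ x'),
    (act.obj (𝟙_ A)).map h ≫ (unitor x').hom = (unitor x).hom ≫ h
  pentagon : ∀ (a b c : A) (x : L),
    (act.map (α_ a b c).hom).app x ≫ (assoc a (b ⊗ c) x).hom ≫
      (act.obj a).map (assoc b c x).hom =
    (assoc (a ⊗ b) c x).hom ≫ (assoc a b ((act.obj c).obj x)).hom
  triangle : ∀ (a : A) (x : L),
    (act.map (λ_ a).hom).app x = (assoc (𝟙_ A) a x).hom ≫ (unitor ((act.obj a).obj x)).hom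
  triangle' : ∀ (a : A) (x : L),
    (act.map (ρ_ a).hom).app x = (assoc a (𝟙_ A) x).hom ≫ (act.obj a).map (unitor x).hom

abbrev LeftModuleStruct.smul {A : Type*} [Category A] [MonoidalCategory A]
    {L : Type*} [Category L] (M : LeftModuleStruct A L) (a : A) (x : L) : L :=
  (M.act.obj a).obj x

variable {B : Type*} [Category B] [MonoidalCategory B] [RightRigidCategory B]
variable {M : Type*} [Category M]
variable (MB : LeftModuleStruct B M) (F : M ⥤ M)
variable (α : ∀ (b : B) (x : M), MB.smul b (F.obj x) ⟶ F.obj (MB.smul b x))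

/-- The candidate inverse of the lax structure morphism, built from the duality data. -/
noncomputable def laxInv (b : B) (x : M) : F.obj (MB.smul b x) ⟶ MB.smul b (F.obj x) :=
  (MB.unitor (F.obj (MB.smul b x))).inv ≫
    (MB.act.map (η_ b bᘁ)).app (F.obj (MB.smul b x)) ≫
    (MB.assoc b bᘁ (F.obj (MB.smul b x))).hom ≫
    (MB.act.obj b).map (α bᘁ (MB.smul b x)) ≫
    (MB.act.obj b).map (F.map ((MB.assoc bᘁ b x).inv)) ≫
    (MB.act.obj b).map (F.map ((MB.act.map (ε_ b bᘁ)).app x)) ≫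
    (MB.act.obj b).map (F.map (MB.unitor x).hom)

/-- The zigzag identity in `B`, in tensor-hom form. -/
lemma zigB (b : B) :
    (λ_ b).inv ≫ (η_ b bᘁ ⊗ₘ 𝟙 b) ≫ (α_ b bᘁ b).hom ≫ (𝟙 b ⊗ₘ ε_ b bᘁ) ≫ (ρ_ b).hom = 𝟙 b := by
  simp [tensorHom_id, id_tensorHom]

/-- The module-category zigzag: the canonical composite `b ⊙ x ⟶ b ⊙ x` built from the
duality data of `b` is the identity. -/
lemma zig (b : B) (x : M) :
    (MB.unitor (MB.smul b x)).inv ≫ (MB.act.map (η_ b bᘁ)).app (MB.smul b x) ≫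
      (MB.assoc b bᘁ (MB.smul b x)).hom ≫
      (MB.act.obj b).map ((MB.assoc bᘁ b x).inv ≫ (MB.act.map (ε_ b bᘁ)).app x ≫
        (MB.unitor x).hom) = 𝟙 (MB.smul b x) := by
  simp only [LeftModuleStruct.smul, Functor.map_comp]
  have h1 : (MB.assoc (𝟙_ B) b x).hom ≫
      (MB.act.map (η_ b bᘁ)).app ((MB.act.obj b).obj x) =
      (MB.act.map (η_ b bᘁ ⊗ₘ 𝟙 b)).app x ≫ (MB.assoc (b ⊗ bᘁ) b x).hom := by
    have := MB.assoc_natural (η_ b bᘁ) (𝟙 b) (𝟙 x)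
    simp only [CategoryTheory.Functor.map_id, NatTrans.id_app, Category.comp_id,
      Category.id_comp] at this
    exact this.symm
  have h2 : (MB.act.map (λ_ b).inv).app x ≫ (MB.assoc (𝟙_ B) b x).hom =
      (MB.unitor ((MB.act.obj b).obj x)).inv := by
    rw [← Iso.comp_hom_eq_id (MB.unitor ((MB.act.obj b).obj x)), Category.assoc,
      ← MB.triangle, ← NatTrans.comp_app, ← MB.act.map_comp]
    simp
  have h3 : (MB.assoc (b ⊗ bᘁ) b x).hom ≫ (MB.assoc b bᘁ ((MB.act.obj b).obj x)).hom ≫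
      (MB.act.obj b).map (MB.assoc bᘁ b x).inv =
      (MB.act.map (α_ b bᘁ b).hom).app x ≫ (MB.assoc b (bᘁ ⊗ b) x).hom := by
    rw [← Category.assoc, ← MB.pentagon b bᘁ b x]
    simp [← Functor.map_comp]
  have h4 : (MB.assoc b (bᘁ ⊗ b) x).hom ≫ (MB.act.obj b).map ((MB.act.map (ε_ b bᘁ)).app x) =
      (MB.act.map (𝟙 b ⊗ₘ ε_ b bᘁ)).app x ≫ (MB.assoc b (𝟙_ B) x).hom := by
    have := MB.assoc_natural (𝟙 b) (ε_ b bᘁ) (𝟙 x)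
    simp only [CategoryTheory.Functor.map_id, NatTrans.id_app, Category.comp_id,
      Category.id_comp] at this
    exact this.symm
  have h5 : (MB.assoc b (𝟙_ B) x).hom ≫ (MB.act.obj b).map (MB.unitor x).hom =
      (MB.act.map (ρ_ b).hom).app x := (MB.triangle' b x).symm
  rw [← h2]
  slice_lhs 2 3 => rw [h1]
  slice_lhs 3 5 => rw [h3]
  slice_lhs 4 5 => rw [h4]
  slice_lhs 5 6 => rw [h5]
  simp only [← NatTrans.comp_app, ← Functor.map_comp, Category.assoc]
  rw [zigB]
  simp

theorem lax_module_functor_is_strong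
    -- `α` is natural ...
    (hnat : ∀ {b b' : B} (f : b ⟶ b') {x x' : M} (g : x ⟶ x'),
      (MB.act.map f).app (F.obj x) ≫ (MB.act.obj b').map (F.map g) ≫ α b' x' =
        α b x ≫ F.map ((MB.act.map f).app x ≫ (MB.act.obj b').map g))
    -- ... and satisfies the lax module functor coherences
    (hassoc : ∀ (a b : B) (x : M),
      (MB.assoc a b (F.obj x)).hom ≫ (MB.act.obj a).map (α b x) ≫ α a (MB.smul b x) =
        α (a ⊗ b) x ≫ F.map (MB.assoc a b x).hom)
    (hunit : ∀ x : M,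
      α (𝟙_ B) x ≫ F.map (MB.unitor x).hom = (MB.unitor (F.obj x)).hom) :
    -- then each `α_{b,x}` is invertible, with the stated inverse
    ∀ (b : B) (x : M),
      α b x ≫ laxInv MB F α b x = 𝟙 (MB.smul b (F.obj x)) ∧
      laxInv MB F α b x ≫ α b x = 𝟙 (F.obj (MB.smul b x)) := by
  intro b x
  constructor
  · -- α ≫ laxInv = 𝟙
    have tA : α b x ≫ (MB.unitor (F.obj (MB.smul b x))).inv =
        (MB.unitor (MB.smul b (F.obj x))).inv ≫ (MB.act.obj (𝟙_ B)).map (α b x) := by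
      rw [Iso.comp_inv_eq, Category.assoc, MB.unitor_natural, Iso.inv_hom_id_assoc]
    have tB : (MB.act.obj (𝟙_ B)).map (α b x) ≫
        (MB.act.map (η_ b bᘁ)).app (F.obj (MB.smul b x)) =
        (MB.act.map (η_ b bᘁ)).app (MB.smul b (F.obj x)) ≫
          (MB.act.obj (b ⊗ bᘁ)).map (α b x) :=
      (MB.act.map (η_ b bᘁ)).naturality (α b x)
    have tC : (MB.act.obj (b ⊗ bᘁ)).map (α b x) ≫ (MB.assoc b bᘁ (F.obj (MB.smul b x))).hom =
        (MB.assoc b bᘁ (MB.smul b (F.obj x))).hom ≫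
          (MB.act.obj b).map ((MB.act.obj bᘁ).map (α b x)) := by
      have := MB.assoc_natural (𝟙 b) (𝟙 bᘁ) (α b x)
      simp only [MonoidalCategory.id_tensorHom_id, CategoryTheory.Functor.map_id, NatTrans.id_app,
        Category.comp_id, Category.id_comp] at this
      exact this
    have tDinner : (MB.act.obj bᘁ).map (α b x) ≫ α bᘁ (MB.smul b x) ≫
        F.map (MB.assoc bᘁ b x).inv =
        (MB.assoc bᘁ b (F.obj x)).inv ≫ α (bᘁ ⊗ b) x := by
      have h := hassoc bᘁ b x
      calc (MB.act.obj bᘁ).map (α b x) ≫ α bᘁ (MB.smul b x) ≫ F.map (MB.assoc bᘁ b x).inv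
          = (MB.assoc bᘁ b (F.obj x)).inv ≫ ((MB.assoc bᘁ b (F.obj x)).hom ≫
              (MB.act.obj bᘁ).map (α b x) ≫ α bᘁ (MB.smul b x)) ≫
              F.map (MB.assoc bᘁ b x).inv := by simp
        _ = _ := by rw [h]; simp [← Functor.map_comp]
    have tD : (MB.act.obj b).map ((MB.act.obj bᘁ).map (α b x)) ≫
        (MB.act.obj b).map (α bᘁ (MB.smul b x)) ≫
        (MB.act.obj b).map (F.map (MB.assoc bᘁ b x).inv) =
        (MB.act.obj b).map (MB.assoc bᘁ b (F.obj x)).inv ≫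
          (MB.act.obj b).map (α (bᘁ ⊗ b) x) := by
      simp only [← Functor.map_comp]; rw [tDinner]
    have tEinner : α (bᘁ ⊗ b) x ≫ F.map ((MB.act.map (ε_ b bᘁ)).app x ≫
        (MB.unitor x).hom) =
        (MB.act.map (ε_ b bᘁ)).app (F.obj x) ≫ (MB.unitor (F.obj x)).hom := by
      have h := hnat (ε_ b bᘁ) (𝟙 x)
      simp only [CategoryTheory.Functor.map_id, NatTrans.id_app, Category.comp_id,
        Category.id_comp] at h
      rw [Functor.map_comp, ← Category.assoc, ← h, Category.assoc, hunit x]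
    have tE : (MB.act.obj b).map (α (bᘁ ⊗ b) x) ≫
        (MB.act.obj b).map (F.map ((MB.act.map (ε_ b bᘁ)).app x)) ≫
        (MB.act.obj b).map (F.map (MB.unitor x).hom) =
        (MB.act.obj b).map ((MB.act.map (ε_ b bᘁ)).app (F.obj x)) ≫
          (MB.act.obj b).map (MB.unitor (F.obj x)).hom := by
      simp only [← Functor.map_comp]; rw [tEinner]
    show α b x ≫ (MB.unitor (F.obj (MB.smul b x))).inv ≫ _ ≫ _ ≫ _ ≫ _ ≫ _ ≫ _ = _
    slice_lhs 1 2 => rw [tA]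
    slice_lhs 2 3 => rw [tB]
    slice_lhs 3 4 => rw [tC]
    slice_lhs 4 6 => rw [tD]
    slice_lhs 5 7 => rw [tE]
    simpa using zig MB b (F.obj x)
  · -- laxInv ≫ α = 𝟙
    have sA : (MB.act.obj b).map (F.map (MB.assoc bᘁ b x).inv) ≫
        (MB.act.obj b).map (F.map ((MB.act.map (ε_ b bᘁ)).app x)) ≫
        (MB.act.obj b).map (F.map (MB.unitor x).hom) ≫ α b x =
        α b (MB.smul bᘁ (MB.smul b x)) ≫
          F.map ((MB.act.obj b).map (MB.assoc bᘁ b x).inv) ≫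
          F.map ((MB.act.obj b).map ((MB.act.map (ε_ b bᘁ)).app x)) ≫
          F.map ((MB.act.obj b).map (MB.unitor x).hom) := by
      have h := hnat (𝟙 b) ((MB.assoc bᘁ b x).inv ≫ (MB.act.map (ε_ b bᘁ)).app x ≫
        (MB.unitor x).hom)
      simp only [CategoryTheory.Functor.map_id, NatTrans.id_app, Category.id_comp,
        Functor.map_comp, Category.assoc] at h
      exact h
    have sB := hassoc b bᘁ (MB.smul b x)
    have sC : (MB.act.map (η_ b bᘁ)).app (F.obj (MB.smul b x)) ≫ α (b ⊗ bᘁ) (MB.smul b x) =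
        α (𝟙_ B) (MB.smul b x) ≫ F.map ((MB.act.map (η_ b bᘁ)).app (MB.smul b x)) := by
      have h := hnat (η_ b bᘁ) (𝟙 (MB.smul b x))
      simp only [CategoryTheory.Functor.map_id, NatTrans.id_app, Category.comp_id,
        Category.id_comp] at h
      exact h
    have sD : (MB.unitor (F.obj (MB.smul b x))).inv ≫ α (𝟙_ B) (MB.smul b x) =
        F.map (MB.unitor (MB.smul b x)).inv := by
      calc (MB.unitor (F.obj (MB.smul b x))).inv ≫ α (𝟙_ B) (MB.smul b x)
          = (MB.unitor (F.obj (MB.smul b x))).inv ≫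
              (α (𝟙_ B) (MB.smul b x) ≫ F.map (MB.unitor (MB.smul b x)).hom) ≫
              F.map (MB.unitor (MB.smul b x)).inv := by simp [← Functor.map_comp]
        _ = _ := by rw [hunit]; simp
    show ((MB.unitor (F.obj (MB.smul b x))).inv ≫ _ ≫ _ ≫ _ ≫ _ ≫ _ ≫ _) ≫ α b x = _
    simp only [Category.assoc]
    slice_lhs 5 8 => rw [sA]
    slice_lhs 3 5 => rw [sB]
    slice_lhs 2 3 => rw [sC]
    slice_lhs 1 2 => rw [sD]
    simp only [← Functor.map_comp, Category.assoc]
    rw [zig MB b x]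
    simp


end Stmt15
end

section
/- Let 𝒞 be a braided monoidal category and 𝓜 a strongly unital monoidal left 𝒞-module (given by a braided monoidal functor φ : 𝒞̄ → Z₁(𝓜)) that is enriched in 𝒞̄, and suppose the canonical enriched monoidal category ᶜ𝓜 satisfies the existence condition for enriched half-braiding hom-objects. Then for objects (x,β̄_{−,x}), (y,β̄_{−,y}) of the enriched Drinfeld center, the hom-object [(x,β̄_{−,x}),(y,β̄_{−,y})] ∈ Z₂(𝒞) coincides with the internal hom in Z₂(𝒞) for the Müger centralizer Z₂(φ) of 𝒞̄ in Z₁(𝓜): there is a natural bijection between morphisms ζ : a → [x,y]_𝒞 (a ∈ Z₂(𝒞)) satisfying the equalizing condition and morphisms a ⊙ (x,β_{−,x}) → (y,β_{−,y}) in Z₂(φ). -/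
/-!
STATEMENT 18: Let `𝒞` be braided and `𝓜` a strongly unital monoidal left `𝒞`-module given
by a braided monoidal functor `φ : 𝒞̄ ⥤ Z₁(𝓜)`, enriched in `𝒞̄` via internal homs
`[x,y]_𝒞`.  For objects `(x,β̄_{−,x})`, `(y,β̄_{−,y})` of the enriched Drinfeld center of
the canonical construction, and `a ∈ Z₂(𝒞)`, there is a natural bijection between
morphisms `ζ : a ⟶ [x,y]_𝒞` satisfying the enriched equalizing condition and morphisms
`a ⊙ (x,β_{−,x}) ⟶ (y,β_{−,y})` in the Müger centralizer `Z₂(φ)` of `𝒞̄` in `Z₁(𝓜)`: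
`ζ` satisfies the equalizing condition iff its adjunct `φ(a)⊗x ⟶ y` commutes with the
half-braidings.
-/

open CategoryTheory MonoidalCategory BraidedCategory CategoryTheory.Functor.LaxMonoidal

namespace Stmt18

variable {C : Type*} [Category C] [MonoidalCategory C] [BraidedCategory C]
variable {M : Type*} [Category M] [MonoidalCategory M]

/-- Transparency in `𝒞` (membership in the Müger center `Z₂(𝒞)`). -/
def Transparent (a : C) : Prop :=
  ∀ u : C, (β_ a u).hom ≫ (β_ u a).hom = 𝟙 (a ⊗ u)

variable (φ : C ⥤ CategoryTheory.Center M)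

/-- The underlying action object `φ(a) ∈ 𝓜`. -/
noncomputable abbrev Iobj (a : C) : M := (φ.obj a).1

section

variable (H : M → M → C)
variable (e : ∀ (a : C) (x y : M), ((Iobj φ a ⊗ x) ⟶ y) ≃ (a ⟶ H x y))

/-- Evaluation `φ([x,y]) ⊗ x ⟶ y`. -/
noncomputable def evm (x y : M) : Iobj φ (H x y) ⊗ x ⟶ y := (e (H x y) x y).symm (𝟙 _)

/-- Postcomposition `[w,m] ⟶ [w,n]` with `g : m ⟶ n`. -/
noncomputable def Hpost (w : M) {m n : M} (g : m ⟶ n) : H w m ⟶ H w n :=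
  e (H w m) w n (evm φ H e w m ≫ g)

/-- Precomposition `[n,w] ⟶ [m,w]` with `g : m ⟶ n`. -/
noncomputable def Hpre (w : M) {m n : M} (g : m ⟶ n) : H n w ⟶ H m w :=
  e (H n w) m w ((_ ◁ g) ≫ evm φ H e n w)

/-- Enriched left whiskering `[x,y] ⟶ [z⊗x, z⊗y]`, using the half-braiding of `φ([x,y])`. -/
noncomputable def Lwhisk (x y z : M) : H x y ⟶ H (z ⊗ x) (z ⊗ y) :=
  e (H x y) (z ⊗ x) (z ⊗ y)
    ((α_ (Iobj φ (H x y)) z x).inv ≫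
      (((φ.obj (H x y)).2.β z).hom ▷ x) ≫
      (α_ z (Iobj φ (H x y)) x).hom ≫ (z ◁ evm φ H e x y))

/-- Enriched right whiskering `[x,y] ⟶ [x⊗z, y⊗z]`. -/
noncomputable def Rwhisk (x y z : M) : H x y ⟶ H (x ⊗ z) (y ⊗ z) :=
  e (H x y) (x ⊗ z) (y ⊗ z)
    ((α_ (Iobj φ (H x y)) x z).inv ≫ (evm φ H e x y ▷ z))

variable (X Y : CategoryTheory.Center M)

/-- First canonical morphism `[x,y] ⟶ [z⊗x, y⊗z]` of the enriched Drinfeld center. -/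
noncomputable def mor1C (z : M) : H X.1 Y.1 ⟶ H (z ⊗ X.1) (Y.1 ⊗ z) :=
  Lwhisk φ H e X.1 Y.1 z ≫ Hpost φ H e (z ⊗ X.1) (Y.2.β z).inv

/-- Second canonical morphism `[x,y] ⟶ [z⊗x, y⊗z]` of the enriched Drinfeld center. -/
noncomputable def mor2C (z : M) : H X.1 Y.1 ⟶ H (z ⊗ X.1) (Y.1 ⊗ z) :=
  Rwhisk φ H e X.1 Y.1 z ≫ Hpre φ H e (Y.1 ⊗ z) (X.2.β z).inv

/-- `t : φ(a) ⊗ x ⟶ y` is a morphism in the Müger centralizer `Z₂(φ)`: it commutes with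
the half-braidings of `φ(a)`, `x` and `y`. -/
def CentralCond (a : C) (t : Iobj φ a ⊗ X.1 ⟶ Y.1) : Prop :=
  ∀ z : M,
    (α_ z (Iobj φ a) X.1).inv ≫ (((φ.obj a).2.β z).inv ▷ X.1) ≫
        (α_ (Iobj φ a) z X.1).hom ≫ (Iobj φ a ◁ (X.2.β z).inv) ≫
        (α_ (Iobj φ a) X.1 z).inv ≫ (t ▷ z) =
      (z ◁ t) ≫ (Y.2.β z).inv

theorem enriched_center_hom_is_centralizer_hom
    [φ.Monoidal]
    -- `φ` is braided with respect to the inverse braiding of `𝒞`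
    (hφ : ∀ a b : C,
      (β_ (φ.obj a) (φ.obj b)).hom ≫ μ φ b a = μ φ a b ≫ φ.map (β_ b a).inv)
    -- naturality of the internal-hom adjunction in the `𝒞`-variable
    (nat : ∀ {a a' : C} (f : a' ⟶ a) {x y : M} (g : Iobj φ a ⊗ x ⟶ y),
      e a' x y (((φ.map f).f ▷ x) ≫ g) = f ≫ e a x y g)
    -- `a` lies in the Müger center `Z₂(𝒞)`
    (a : C) (ha : Transparent a) :
    -- `ζ : a ⟶ [x,y]` equalizes the two canonical morphisms iff its adjunct
    -- `φ(a) ⊗ x ⟶ y` is a morphism in the Müger centralizer `Z₂(φ)`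
    ∀ ζ : a ⟶ H X.1 Y.1,
      (∀ z : M, ζ ≫ mor1C φ H e X Y z = ζ ≫ mor2C φ H e X Y z) ↔
        CentralCond φ X Y a ((e a X.1 Y.1).symm ζ) := by
  intro ζ
  -- naturality of the inverse adjunction in the `𝒞`-variable
  have esymm_comp : ∀ {a' a'' : C} (f : a'' ⟶ a') {x y : M} (ψ : a' ⟶ H x y),
      (e a'' x y).symm (f ≫ ψ) = ((φ.map f).f ▷ x) ≫ (e a' x y).symm ψ := by
    intro a' a'' f x y ψ
    apply (e a'' x y).injective
    rw [Equiv.apply_symm_apply, nat, Equiv.apply_symm_apply]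
  set t : Iobj φ a ⊗ X.1 ⟶ Y.1 := (e a X.1 Y.1).symm ζ with htdef
  have ht : t = ((φ.map ζ).f ▷ X.1) ≫ evm φ H e X.1 Y.1 := by
    have := esymm_comp ζ (𝟙 (H X.1 Y.1))
    simpa [evm] using this
  -- closed form of the adjunct of `ζ ≫ mor1C z`
  have hL : ∀ z : M, (e a (z ⊗ X.1) (Y.1 ⊗ z)).symm (ζ ≫ mor1C φ H e X Y z) =
      (α_ (Iobj φ a) z X.1).inv ≫ (((φ.obj a).2.β z).hom ▷ X.1) ≫
        (α_ z (Iobj φ a) X.1).hom ≫ (z ◁ t) ≫ (Y.2.β z).inv := by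
    intro z
    have hLw : ((φ.map (Lwhisk φ H e X.1 Y.1 z)).f ▷ (z ⊗ X.1)) ≫
        evm φ H e (z ⊗ X.1) (z ⊗ Y.1) =
        (e (H X.1 Y.1) (z ⊗ X.1) (z ⊗ Y.1)).symm (Lwhisk φ H e X.1 Y.1 z) := by
      have := esymm_comp (Lwhisk φ H e X.1 Y.1 z) (𝟙 (H (z ⊗ X.1) (z ⊗ Y.1)))
      simpa [evm] using this.symm
    rw [mor1C, esymm_comp, esymm_comp]
    simp only [Hpost, Equiv.symm_apply_apply, ← Category.assoc]
    rw [Category.assoc ((φ.map ζ).f ▷ (z ⊗ X.1)), hLw]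
    simp only [Lwhisk, Equiv.symm_apply_apply]
    simp only [← Category.assoc]
    congr 1
    rw [ht]
    simp only [Category.assoc, associator_inv_naturality_left_assoc,
      MonoidalCategory.whiskerLeft_comp]
    slice_lhs 2 3 => rw [← comp_whiskerRight, (φ.map ζ).comm z]
    simp only [comp_whiskerRight, Category.assoc, associator_naturality_middle_assoc]
  -- closed form of the adjunct of `ζ ≫ mor2C z`
  have hR : ∀ z : M, (e a (z ⊗ X.1) (Y.1 ⊗ z)).symm (ζ ≫ mor2C φ H e X Y z) =
      (Iobj φ a ◁ (X.2.β z).inv) ≫ (α_ (Iobj φ a) X.1 z).inv ≫ (t ▷ z) := by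
    intro z
    have hRw : ((φ.map (Rwhisk φ H e X.1 Y.1 z)).f ▷ (X.1 ⊗ z)) ≫
        evm φ H e (X.1 ⊗ z) (Y.1 ⊗ z) =
        (e (H X.1 Y.1) (X.1 ⊗ z) (Y.1 ⊗ z)).symm (Rwhisk φ H e X.1 Y.1 z) := by
      have := esymm_comp (Rwhisk φ H e X.1 Y.1 z) (𝟙 (H (X.1 ⊗ z) (Y.1 ⊗ z)))
      simpa [evm] using this.symm
    rw [mor2C, esymm_comp, esymm_comp]
    simp only [Hpre, Equiv.symm_apply_apply]
    rw [← whisker_exchange_assoc, hRw]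
    simp only [Rwhisk, Equiv.symm_apply_apply]
    rw [← whisker_exchange_assoc]
    congr 1
    rw [ht]
    simp only [associator_inv_naturality_left_assoc, comp_whiskerRight, Category.assoc]
  constructor
  · intro h z
    have hz := congrArg (e a (z ⊗ X.1) (Y.1 ⊗ z)).symm (h z)
    rw [hL, hR] at hz
    show (α_ z (Iobj φ a) X.1).inv ≫ (((φ.obj a).2.β z).inv ▷ X.1) ≫
        (α_ (Iobj φ a) z X.1).hom ≫ (Iobj φ a ◁ (X.2.β z).inv) ≫
        (α_ (Iobj φ a) X.1 z).inv ≫ (t ▷ z) = (z ◁ t) ≫ (Y.2.β z).inv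
    rw [← hz]
    simp only [Category.assoc, Iso.hom_inv_id_assoc, Iso.inv_hom_id_assoc,
      hom_inv_whiskerRight_assoc, inv_hom_whiskerRight_assoc]
  · intro h z
    apply (e a (z ⊗ X.1) (Y.1 ⊗ z)).symm.injective
    rw [hL, hR]
    have hz := h z
    rw [← hz]
    simp only [Category.assoc, Iso.hom_inv_id_assoc, Iso.inv_hom_id_assoc,
      hom_inv_whiskerRight_assoc, inv_hom_whiskerRight_assoc]

end

end Stmt18
end
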